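/- Let Q : ℝ → M₃(ℝ) be a differentiable matrix-valued function, Φ : ℝ → M₃(ℝ) a differentiable symmetric-matrix-valued function, and ρ₀ : ℝ → ℝ differentiable. Define the homogeneous ansatz v(t,x) = Q(t)x, ρ(t,x) = ρ₀(t), φ(t,x) = ½⟨x, Φ(t)x⟩. Then (v, ρ, φ) satisfies the Newtonian dust system on all of ℝ × ℝ³ if and only if for all t: Q̇(t) = −Q(t)² − Φ(t), ρ̇₀(t) = −ρ₀(t)·tr Q(t), and tr Φ(t) = 4πG ρ₀(t). -/

import Mathlib

open MeasureTheory Real Matrix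
open scoped ENNReal
noncomputable section

/-- ℝ³ with Cartesian coordinates. -/
abbrev V3 := Fin 3 → ℝ

/-- Partial derivative `∂_i f (x)` of a scalar function on ℝ³. -/
def pd (f : V3 → ℝ) (i : Fin 3) (x : V3) : ℝ := fderiv ℝ f x (Pi.single i 1)

/-- The Newtonian dust (Euler–Poisson) system with gravitational constant `Gc`:
(i) `∂ₜ v^a + v^b ∂_b v^a = −∂_a φ`,
(ii) `∂ₜ ρ + v^a ∂_a ρ = −ρ ∂_a v^a`,
(iii) `Δφ = 4πG ρ`, at every time `t` and point `x`. -/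
def NewtonianDust (Gc : ℝ) (v : ℝ → V3 → V3) (ρ φ : ℝ → V3 → ℝ) : Prop :=
  ∀ t x,
    (∀ a, deriv (fun s => v s x a) t + ∑ b, v t x b * pd (fun y => v t y a) b x
        = - pd (φ t) a x) ∧
    (deriv (fun s => ρ s x) t + ∑ b, v t x b * pd (ρ t) b x
        = - ρ t x * ∑ a, pd (fun y => v t y a) a x) ∧
    (∑ a, pd (pd (φ t) a) a x = 4 * π * Gc * ρ t x)

/-- The homogeneous ansatz `v(t,x) = Q(t)x`, `ρ(t,x) = ρ₀(t)`,
`φ(t,x) = ½⟨x, Φ(t)x⟩` solves the Newtonian dust system iff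
`Q̇ = −Q² − Φ`, `ρ̇₀ = −ρ₀ tr Q`, and `tr Φ = 4πG ρ₀`. -/

lemma hasFDerivAt_coord (c : Fin 3) (x : V3) :
    HasFDerivAt (fun y : V3 => y c) (ContinuousLinearMap.proj c : V3 →L[ℝ] ℝ) x :=
  (ContinuousLinearMap.proj c : V3 →L[ℝ] ℝ).hasFDerivAt

lemma pd_linear (A : Matrix (Fin 3) (Fin 3) ℝ) (a b : Fin 3) (x : V3) :
    pd (fun y => A.mulVec y a) b x = A a b := by
  have h : HasFDerivAt (fun y : V3 => A.mulVec y a)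
      (∑ c, A a c • (ContinuousLinearMap.proj c : V3 →L[ℝ] ℝ)) x := by
    simpa [Matrix.mulVec, dotProduct] using
      HasFDerivAt.fun_sum (fun c _ => ((hasFDerivAt_coord c x).const_mul (A a c)))
  rw [pd, h.fderiv]
  simp [Pi.single_apply]

lemma pd_quad (A : Matrix (Fin 3) (Fin 3) ℝ) (a : Fin 3) (x : V3) :
    pd (fun y : V3 => (1/2) * ∑ i, ∑ j, y i * (A i j * y j)) a x
      = (1/2) * ((∑ i, x i * A i a) + ∑ j, A a j * x j) := by
  have h : HasFDerivAt (fun y : V3 => (1/2:ℝ) * ∑ i, ∑ j, y i * (A i j * y j))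
      ((1/2:ℝ) • ∑ i, ∑ j, (x i • (A i j • (ContinuousLinearMap.proj j : V3 →L[ℝ] ℝ))
        + (A i j * x j) • (ContinuousLinearMap.proj i : V3 →L[ℝ] ℝ))) x := by
    refine HasFDerivAt.const_mul ?_ _
    refine HasFDerivAt.fun_sum fun i _ => HasFDerivAt.fun_sum fun j _ => ?_
    exact (hasFDerivAt_coord i x).mul ((hasFDerivAt_coord j x).const_mul (A i j))
  rw [pd, h.fderiv]
  simp [Pi.single_apply, Finset.sum_add_distrib, mul_ite, mul_comm, mul_left_comm]
  ring

lemma pd_quad' (A : Matrix (Fin 3) (Fin 3) ℝ) (hA : Aᵀ = A) (a : Fin 3) (x : V3) :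
    pd (fun y : V3 => (1/2) * ∑ i, ∑ j, y i * (A i j * y j)) a x = A.mulVec x a := by
  rw [pd_quad]
  have hsym : ∀ i, A i a = A a i := fun i => by
    rw [← congrFun (congrFun hA i) a, Matrix.transpose_apply]
  simp only [hsym, Matrix.mulVec, dotProduct]
  rw [Finset.sum_congr rfl (fun i _ => mul_comm (x i) (A a i))]
  ring

lemma pd2_quad (A : Matrix (Fin 3) (Fin 3) ℝ) (hA : Aᵀ = A) (a : Fin 3) (x : V3) :
    pd (pd (fun y : V3 => (1/2) * ∑ i, ∑ j, y i * (A i j * y j)) a) a x = A a a := by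
  have h : pd (fun y : V3 => (1/2) * ∑ i, ∑ j, y i * (A i j * y j)) a
      = fun y => A.mulVec y a := funext (pd_quad' A hA a)
  rw [h, pd_linear]

theorem homogeneous_ansatz_iff (Gc : ℝ) (hGc : 0 < Gc)
    (Q Φ : ℝ → Matrix (Fin 3) (Fin 3) ℝ) (ρ₀ : ℝ → ℝ)
    (hQ : ∀ a b, Differentiable ℝ (fun t => Q t a b))
    (hΦ : ∀ a b, Differentiable ℝ (fun t => Φ t a b))
    (hΦsymm : ∀ t, (Φ t)ᵀ = Φ t)
    (hρ₀ : Differentiable ℝ ρ₀) :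
    NewtonianDust Gc (fun t x => (Q t).mulVec x) (fun t _ => ρ₀ t)
        (fun t x => (1 / 2) * ∑ a, ∑ b, x a * (Φ t a b * x b)) ↔
      ∀ t, (∀ a b, deriv (fun s => Q s a b) t = -((Q t * Q t) a b) - Φ t a b) ∧
        deriv ρ₀ t = -ρ₀ t * (Q t).trace ∧
        (Φ t).trace = 4 * π * Gc * ρ₀ t := by
  have hd : ∀ (t : ℝ) (x : V3) (a : Fin 3),
      deriv (fun s => (Q s).mulVec x a) t = ∑ c, deriv (fun s => Q s a c) t * x c := by
    intro t x a
    have h : HasDerivAt (fun s => (Q s).mulVec x a)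
        (∑ c, deriv (fun s => Q s a c) t * x c) t := by
      simpa [Matrix.mulVec, dotProduct] using
        HasDerivAt.fun_sum (fun c (_ : c ∈ Finset.univ) =>
          (((hQ a c) t).hasDerivAt.mul_const (x c)))
    exact h.deriv
  have hpdconst : ∀ (c : ℝ) (b : Fin 3) (x : V3), pd (fun _ => c) b x = 0 := by
    intro c b x; simp [pd]
  have key : ∀ (t : ℝ) (x : V3) (a : Fin 3),
      deriv (fun s => (Q s).mulVec x a) t
        + ∑ b, (Q t).mulVec x b * pd (fun y => (Q t).mulVec y a) b x
        + pd (fun y : V3 => (1/2) * ∑ i, ∑ j, y i * (Φ t i j * y j)) a x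
      = ∑ c, (deriv (fun s => Q s a c) t + (Q t * Q t) a c + Φ t a c) * x c := by
    intro t x a
    rw [hd, pd_quad' (Φ t) (hΦsymm t)]
    simp only [pd_linear]
    simp only [Matrix.mulVec, dotProduct, Matrix.mul_apply, Fin.sum_univ_three]
    ring
  constructor
  · intro H t
    refine ⟨?_, ?_, ?_⟩
    · intro a b
      have h1 : deriv (fun s => (Q s).mulVec (Pi.single b 1 : V3) a) t
          + ∑ b', (Q t).mulVec (Pi.single b 1) b' *
              pd (fun y => (Q t).mulVec y a) b' (Pi.single b 1)
          = - pd (fun y : V3 => (1/2) * ∑ i, ∑ j, y i * (Φ t i j * y j)) a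
              (Pi.single b 1) := (H t (Pi.single b 1)).1 a
      have h3 : (∑ c, (deriv (fun s => Q s a c) t + (Q t * Q t) a c + Φ t a c)
          * (Pi.single b 1 : V3) c) = 0 := by
        rw [← key t (Pi.single b 1) a]; linarith [h1]
      simp [Pi.single_apply] at h3
      linarith [h3]
    · have h2 : deriv (fun s => ρ₀ s) t
          + ∑ b, (Q t).mulVec (0 : V3) b * pd (fun _ => ρ₀ t) b (0 : V3)
          = - ρ₀ t * ∑ a, pd (fun y => (Q t).mulVec y a) a (0 : V3) :=
        (H t 0).2.1
      simp only [hpdconst, pd_linear, mul_zero, Finset.sum_const_zero, add_zero] at h2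
      simpa [Matrix.trace, Matrix.diag] using h2
    · have h3 : (∑ a, pd (pd (fun y : V3 =>
          (1/2) * ∑ i, ∑ j, y i * (Φ t i j * y j)) a) a (0 : V3))
          = 4 * π * Gc * ρ₀ t := (H t 0).2.2
      simp only [pd2_quad (Φ t) (hΦsymm t)] at h3
      simpa [Matrix.trace, Matrix.diag] using h3
  · intro H t x
    obtain ⟨h1, h2, h3⟩ := H t
    refine ⟨fun a => ?_, ?_, ?_⟩
    · show deriv (fun s => (Q s).mulVec x a) t
          + ∑ b, (Q t).mulVec x b * pd (fun y => (Q t).mulVec y a) b x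
          = - pd (fun y : V3 => (1/2) * ∑ i, ∑ j, y i * (Φ t i j * y j)) a x
      have hk := key t x a
      have hz : (∑ c, (deriv (fun s => Q s a c) t + (Q t * Q t) a c + Φ t a c) * x c)
          = 0 := by
        refine Finset.sum_eq_zero fun c _ => ?_
        rw [h1 a c]; ring
      linarith [hk.trans hz]
    · show deriv (fun s => ρ₀ s) t + ∑ b, (Q t).mulVec x b * pd (fun _ => ρ₀ t) b x
          = - ρ₀ t * ∑ a, pd (fun y => (Q t).mulVec y a) a x
      simp only [hpdconst, pd_linear, mul_zero, Finset.sum_const_zero, add_zero]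
      simpa [Matrix.trace, Matrix.diag] using h2
    · show (∑ a, pd (pd (fun y : V3 =>
          (1/2) * ∑ i, ∑ j, y i * (Φ t i j * y j)) a) a x) = 4 * π * Gc * ρ₀ t
      simp only [pd2_quad (Φ t) (hΦsymm t)]
      simpa [Matrix.trace, Matrix.diag] using h3
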